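/- For every ε > 0 there exist a finite family 𝒪 of pairwise disjoint closed axis-parallel rectangles in ℝ² (obstacles) and points p, q, o ∈ ℝ² lying outside the interior of every obstacle with o ∈ B(p,q), such that σ₁(p,o) + σ₁(o,q) > (3 − ε)·σ₁(p,q), where σ₁ denotes the L1-geodesic distance amid the obstacles. That is, the factor 3 in the two-dimensional inequality σ₁(p,o) + σ₁(o,q) ≤ 3·σ₁(p,q) is tight. -/

import Mathlib

open scoped ENNReal

namespace GeoSpanner

/-- Points of `ℝ^d`. -/
abbrev Pt (d : ℕ) := Fin d → ℝ

/-- The L1 norm `‖x‖₁ = ∑ |xᵢ|`. -/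
def nrm1 {d : ℕ} (x : Pt d) : ℝ := ∑ i, |x i|

/-- The Euclidean (L2) norm. -/
noncomputable def nrm2 {d : ℕ} (x : Pt d) : ℝ := Real.sqrt (∑ i, (x i) ^ 2)

/-- An axis-parallel box: a product of closed bounded intervals. -/
def IsBox {d : ℕ} (B : Set (Pt d)) : Prop := ∃ a b : Pt d, a ≤ b ∧ B = Set.Icc a b

/-- A valid family of obstacles: finitely many pairwise disjoint closed
axis-parallel boxes. -/
def IsObstacleFamily {d : ℕ} (O : Finset (Set (Pt d))) : Prop :=
  (∀ B ∈ O, IsBox B) ∧ (O : Set (Set (Pt d))).Pairwise Disjoint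

/-- The free space: points outside the interior of every obstacle. -/
def free {d : ℕ} (O : Finset (Set (Pt d))) : Set (Pt d) :=
  {x | ∀ B ∈ O, x ∉ interior B}

/-- Length of the path `γ` restricted to `[0,1]`, measured as total variation
with respect to the norm `nrm`. -/
noncomputable def pathLen {d : ℕ} (nrm : Pt d → ℝ) (γ : ℝ → Pt d) : ℝ≥0∞ :=
  ⨆ (n : ℕ) (t : Fin (n + 1) → ℝ)
    (_ : Monotone t ∧ ∀ i, t i ∈ Set.Icc (0 : ℝ) 1),
      ∑ i : Fin n, ENNReal.ofReal (nrm (γ (t i.succ) - γ (t i.castSucc)))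

/-- `γ` is a continuous path from `p` to `q` staying inside the region `F`. -/
def IsPathIn {d : ℕ} (F : Set (Pt d)) (p q : Pt d) (γ : ℝ → Pt d) : Prop :=
  ContinuousOn γ (Set.Icc 0 1) ∧ γ 0 = p ∧ γ 1 = q ∧
    ∀ t ∈ Set.Icc (0 : ℝ) 1, γ t ∈ F

/-- Geodesic distance from `p` to `q` inside the region `F`, with path lengths
measured with respect to the norm `nrm`. -/
noncomputable def geo {d : ℕ} (nrm : Pt d → ℝ) (F : Set (Pt d)) (p q : Pt d) : ℝ≥0∞ :=
  ⨅ (γ : ℝ → Pt d) (_ : IsPathIn F p q γ), pathLen nrm γ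

/-- `B(p,q)`: the closed axis-parallel box with opposite corners `p` and `q`. -/
def corners {d : ℕ} (p q : Pt d) : Set (Pt d) := Set.uIcc p q

/-- Graph distance over the edge set `E` with edge weights given by `σ`. -/
noncomputable def graphDist {d : ℕ} (σ : Pt d → Pt d → ℝ≥0∞) (E : Set (Sym2 (Pt d)))
    (p q : Pt d) : ℝ≥0∞ :=
  ⨅ (n : ℕ) (x : Fin (n + 1) → Pt d)
    (_ : x 0 = p ∧ x (Fin.last n) = q ∧ ∀ i : Fin n, s(x i.castSucc, x i.succ) ∈ E),
      ∑ i : Fin n, σ (x i.castSucc) (x i.succ)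

end GeoSpanner

namespace GeoSpanner

private lemma tel {n : ℕ} (f : Fin (n + 1) → ℝ) :
    ∑ i : Fin n, (f i.succ - f i.castSucc) = f (Fin.last n) - f 0 := by
  induction n with
  | zero => simp
  | succ n ih =>
    rw [Fin.sum_univ_castSucc]
    have h := ih (fun i => f i.castSucc)
    simp only [Fin.succ_castSucc] at h ⊢
    rw [h, Fin.succ_last]
    simp only [Fin.castSucc_zero]
    ring

private lemma mem_interior_Icc {d : ℕ} {a b x : Pt d} :
    x ∈ interior (Set.Icc a b) ↔ ∀ i, x i ∈ Set.Ioo (a i) (b i) := by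
  rw [← Set.pi_univ_Icc, interior_pi_set Set.finite_univ]
  simp [Set.mem_pi, interior_Icc]

private lemma nrm1_two (v : Pt 2) : nrm1 v = |v 0| + |v 1| := by
  simp [nrm1, Fin.sum_univ_two]

private lemma pathLen_ge {d : ℕ} (γ : ℝ → Pt d) {s : ℝ} (hs : s ∈ Set.Icc (0:ℝ) 1) :
    ENNReal.ofReal (nrm1 (γ s - γ 0)) + ENNReal.ofReal (nrm1 (γ 1 - γ s)) ≤
      pathLen nrm1 γ := by
  have hmono : Monotone (![0, s, 1] : Fin 3 → ℝ) := by
    rw [Fin.monotone_iff_le_succ]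
    intro i
    fin_cases i <;> simp [hs.1, hs.2]
  have hmem : ∀ i, (![0, s, 1] : Fin 3 → ℝ) i ∈ Set.Icc (0:ℝ) 1 := by
    intro i
    fin_cases i <;> simp [hs.1, hs.2]
  have key : (∑ i : Fin 2, ENNReal.ofReal
      (nrm1 (γ ((![0, s, 1] : Fin 3 → ℝ) i.succ) - γ ((![0, s, 1] : Fin 3 → ℝ) i.castSucc))))
      ≤ pathLen nrm1 γ := by
    unfold pathLen
    refine le_iSup_of_le 2 ?_
    refine le_iSup_of_le (![0, s, 1] : Fin 3 → ℝ) ?_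
    exact le_iSup_of_le ⟨hmono, hmem⟩ le_rfl
  refine le_trans (le_of_eq ?_) key
  rw [Fin.sum_univ_two]
  norm_num
  rfl

private lemma geo_ge {d : ℕ} {F : Set (Pt d)} {p q : Pt d} {c : ℝ≥0∞}
    (h : ∀ γ : ℝ → Pt d, IsPathIn F p q γ → c ≤ pathLen nrm1 γ) :
    c ≤ geo nrm1 F p q :=
  le_iInf fun γ => le_iInf fun hγ => h γ hγ

private lemma pathLen_le (γ : ℝ → Pt 2)
    (hx : MonotoneOn (fun t => γ t 0) (Set.Icc 0 1))
    (hy : MonotoneOn (fun t => γ t 1) (Set.Icc 0 1)) :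
    pathLen nrm1 γ ≤ ENNReal.ofReal ((γ 1 0 - γ 0 0) + (γ 1 1 - γ 0 1)) := by
  unfold pathLen
  refine iSup_le fun n => iSup_le fun t => iSup_le fun ht => ?_
  obtain ⟨hmono, hmem⟩ := ht
  have hseg : ∀ i : Fin n, nrm1 (γ (t i.succ) - γ (t i.castSucc)) =
      (γ (t i.succ) 0 - γ (t i.castSucc) 0) + (γ (t i.succ) 1 - γ (t i.castSucc) 1) := by
    intro i
    have hle : t i.castSucc ≤ t i.succ := hmono (Fin.castSucc_lt_succ (i := i)).le
    rw [nrm1_two]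
    simp only [Pi.sub_apply]
    rw [abs_of_nonneg, abs_of_nonneg]
    · exact sub_nonneg.mpr (hy (hmem _) (hmem _) hle)
    · exact sub_nonneg.mpr (hx (hmem _) (hmem _) hle)
  have hnn : ∀ i ∈ (Finset.univ : Finset (Fin n)),
      (0:ℝ) ≤ nrm1 (γ (t i.succ) - γ (t i.castSucc)) := fun i _ =>
    Finset.sum_nonneg fun _ _ => abs_nonneg _
  rw [← ENNReal.ofReal_sum_of_nonneg hnn]
  apply ENNReal.ofReal_le_ofReal
  calc ∑ i : Fin n, nrm1 (γ (t i.succ) - γ (t i.castSucc))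
      = ∑ i : Fin n, ((γ (t i.succ) 0 - γ (t i.castSucc) 0)
          + (γ (t i.succ) 1 - γ (t i.castSucc) 1)) := by
        exact Finset.sum_congr rfl fun i _ => hseg i
    _ = (γ (t (Fin.last n)) 0 - γ (t 0) 0) + (γ (t (Fin.last n)) 1 - γ (t 0) 1) := by
        rw [Finset.sum_add_distrib, tel (fun i => γ (t i) 0), tel (fun i => γ (t i) 1)]
    _ ≤ (γ 1 0 - γ 0 0) + (γ 1 1 - γ 0 1) := by
        have h1 := hx (hmem (Fin.last n)) (Set.right_mem_Icc.mpr zero_le_one) (hmem (Fin.last n)).2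
        have h2 := hx (Set.left_mem_Icc.mpr zero_le_one) (hmem 0) (hmem 0).1
        have h3 := hy (hmem (Fin.last n)) (Set.right_mem_Icc.mpr zero_le_one) (hmem (Fin.last n)).2
        have h4 := hy (Set.left_mem_Icc.mpr zero_le_one) (hmem 0) (hmem 0).1
        dsimp at h1 h2 h3 h4
        linarith

/-- the factor 3 in the two-dimensional inequality
σ₁(p,o) + σ₁(o,q) ≤ 3·σ₁(p,q) is tight. -/
theorem statement_6 (ε : ℝ) (hε : 0 < ε) :
    ∃ (O : Finset (Set (Pt 2))) (p q o : Pt 2),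
      IsObstacleFamily O ∧
      p ∈ free O ∧ q ∈ free O ∧ o ∈ free O ∧ o ∈ corners p q ∧
      ENNReal.ofReal (3 - ε) * geo nrm1 (free O) p q <
        geo nrm1 (free O) p o + geo nrm1 (free O) o q := by
  set L : ℝ := max 1 (8 / ε) with hLdef
  have hL1 : (1:ℝ) ≤ L := le_max_left _ _
  have hL0 : (0:ℝ) < L := lt_of_lt_of_le one_pos hL1
  have hεL : 4 < ε * L := by
    have h8 : 8 / ε ≤ L := le_max_right _ _
    have := mul_le_mul_of_nonneg_left h8 hε.le
    rw [mul_div_cancel₀ _ (ne_of_gt hε)] at this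
    linarith
  set a : Pt 2 := ![-(1/2 : ℝ), -(2*L)] with ha
  set b : Pt 2 := ![-(1/4 : ℝ), 0] with hb
  set W : Set (Pt 2) := Set.Icc a b with hW
  set p : Pt 2 := ![-1, -L] with hp
  set q : Pt 2 := ![1, 0] with hq
  set o : Pt 2 := ![0, -L] with ho
  have ha0 : a 0 = -(1/2:ℝ) := rfl
  have ha1 : a 1 = -(2*L) := rfl
  have hb0 : b 0 = -(1/4:ℝ) := rfl
  have hb1 : b 1 = 0 := rfl
  have hp0 : p 0 = -1 := rfl
  have hp1 : p 1 = -L := rfl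
  have hq0 : q 0 = 1 := rfl
  have hq1 : q 1 = 0 := rfl
  have ho0 : o 0 = 0 := rfl
  have ho1 : o 1 = -L := rfl
  have hOfam : IsObstacleFamily ({W} : Finset (Set (Pt 2))) := by
    constructor
    · intro B hB
      rw [Finset.mem_singleton] at hB
      subst hB
      refine ⟨a, b, ?_, rfl⟩
      rw [Pi.le_def, Fin.forall_fin_two, ha0, ha1, hb0, hb1]
      constructor <;> norm_num [hL0.le]
    · simp
  have hfree : ∀ x : Pt 2, ¬ (∀ i, x i ∈ Set.Ioo (a i) (b i)) →
      x ∈ free ({W} : Finset (Set (Pt 2))) := by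
    intro x hx B hB
    rw [Finset.mem_singleton] at hB
    subst hB
    rw [hW, mem_interior_Icc]
    exact hx
  have hpfree : p ∈ free ({W} : Finset (Set (Pt 2))) := by
    refine hfree p fun h => ?_
    have := (h 0).1
    rw [ha0, hp0] at this; norm_num at this
  have hqfree : q ∈ free ({W} : Finset (Set (Pt 2))) := by
    refine hfree q fun h => ?_
    have := (h 0).2
    rw [hb0, hq0] at this; norm_num at this
  have hofree : o ∈ free ({W} : Finset (Set (Pt 2))) := by
    refine hfree o fun h => ?_
    have := (h 0).2
    rw [hb0, ho0] at this; norm_num at this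
  have hcorners : o ∈ corners p q := by
    rw [corners, Set.uIcc, Set.mem_Icc]
    constructor
    · refine le_trans inf_le_left ?_
      rw [Pi.le_def, Fin.forall_fin_two, hp0, hp1, ho0, ho1]
      norm_num
    · refine le_trans ?_ le_sup_right
      rw [Pi.le_def, Fin.forall_fin_two, hq0, hq1, ho0, ho1]
      norm_num [hL0.le]
  -- upper bound on geo p q
  set γpq : ℝ → Pt 2 := fun t => ![(-1:ℝ) + 2 * max (2*t - 1) 0, L * min (2*t) 1 - L]
    with hγpq
  have hγ0 : γpq 0 = p := by
    funext i; fin_cases i <;> simp [hγpq, hp] <;> norm_num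
  have hγ1 : γpq 1 = q := by
    funext i; fin_cases i <;> simp [hγpq, hq] <;> norm_num
  have hγx : ∀ t, γpq t 0 = -1 + 2 * max (2*t - 1) 0 := fun t => rfl
  have hγy : ∀ t, γpq t 1 = L * min (2*t) 1 - L := fun t => rfl
  have hγcont : ContinuousOn γpq (Set.Icc 0 1) := by
    apply Continuous.continuousOn
    apply continuous_pi
    intro i
    have e0 : (fun t => γpq t 0) = fun t => (-1:ℝ) + 2 * max (2*t - 1) 0 := rfl
    have e1 : (fun t => γpq t 1) = fun t => L * min (2*t) 1 - L := rfl
    match i with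
    | 0 => rw [show (fun t => γpq t 0) = _ from e0]; fun_prop
    | 1 => rw [show (fun t => γpq t 1) = _ from e1]; fun_prop
  have hγfree : ∀ t ∈ Set.Icc (0:ℝ) 1, γpq t ∈ free ({W} : Finset (Set (Pt 2))) := by
    intro t _
    refine hfree _ fun h => ?_
    rcases le_or_gt t (1/2) with hc | hc
    · have := (h 0).1
      rw [ha0, hγx] at this
      have hm : max (2*t - 1) 0 = 0 := max_eq_right (by linarith)
      rw [hm] at this; norm_num at this
    · have := (h 1).2
      rw [hb1, hγy] at this
      have hm : min (2*t) 1 = 1 := min_eq_right (by linarith)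
      rw [hm] at this; norm_num at this
  have hpathpq : IsPathIn (free ({W} : Finset (Set (Pt 2)))) p q γpq :=
    ⟨hγcont, hγ0, hγ1, hγfree⟩
  have hub : geo nrm1 (free ({W} : Finset (Set (Pt 2)))) p q ≤ ENNReal.ofReal (L + 2) := by
    refine le_trans (iInf_le_of_le γpq (iInf_le_of_le hpathpq le_rfl)) ?_
    have hmx : MonotoneOn (fun t => γpq t 0) (Set.Icc 0 1) := by
      intro s _ t _ hst
      simp only [hγx]
      have : max (2*s - 1) 0 ≤ max (2*t - 1) 0 := max_le_max (by linarith) le_rfl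
      linarith
    have hmy : MonotoneOn (fun t => γpq t 1) (Set.Icc 0 1) := by
      intro s _ t _ hst
      simp only [hγy]
      have : min (2*s) 1 ≤ min (2*t) 1 := min_le_min (by linarith) le_rfl
      nlinarith [hL0.le]
    refine le_trans (pathLen_le γpq hmx hmy) ?_
    apply ENNReal.ofReal_le_ofReal
    rw [hγ0, hγ1, hp0, hp1, hq0, hq1]
    linarith
  -- lower bound on geo p o
  have hlb1 : ENNReal.ofReal (2*L + 1) ≤ geo nrm1 (free ({W} : Finset (Set (Pt 2)))) p o := by
    apply geo_ge
    rintro γ ⟨hc, h0, h1, hf⟩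
    have hcx : ContinuousOn (fun t => γ t 0) (Set.Icc 0 1) :=
      (continuous_apply 0).comp_continuousOn hc
    have hiv : (-3/8 : ℝ) ∈ (fun t => γ t 0) '' Set.Icc 0 1 := by
      apply intermediate_value_Icc zero_le_one hcx
      rw [h0, h1, hp0, ho0]
      constructor <;> norm_num
    obtain ⟨s, hs, hfs⟩ := hiv
    have hfs' : γ s 0 = -3/8 := hfs
    have hnotint : γ s ∉ interior W := hf s hs W (Finset.mem_singleton_self W)
    rw [hW, mem_interior_Icc] at hnotint
    have hy : γ s 1 ≤ -(2*L) ∨ 0 ≤ γ s 1 := by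
      by_contra hcon
      push_neg at hcon
      apply hnotint
      rw [Fin.forall_fin_two]
      constructor
      · rw [ha0, hb0, Set.mem_Ioo, hfs']
        norm_num
      · rw [ha1, hb1, Set.mem_Ioo]
        exact ⟨hcon.1, hcon.2⟩
    refine le_trans ?_ (pathLen_ge γ hs)
    rw [h0, h1]
    have hA : nrm1 (γ s - p) = |γ s 0 + 1| + |γ s 1 + L| := by
      rw [nrm1_two]; simp only [Pi.sub_apply, hp0, hp1]; ring_nf
    have hB : nrm1 (o - γ s) = |γ s 0| + |γ s 1 + L| := by
      rw [nrm1_two]; simp only [Pi.sub_apply, ho0, ho1]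
      rw [abs_sub_comm (0:ℝ), abs_sub_comm (-L)]
      ring_nf
    have habs : L ≤ |γ s 1 + L| := by
      rcases hy with h | h
      · calc L ≤ -(γ s 1 + L) := by linarith
          _ ≤ |γ s 1 + L| := neg_le_abs _
      · calc L ≤ γ s 1 + L := by linarith
          _ ≤ |γ s 1 + L| := le_abs_self _
    have hsum : 2*L + 1 ≤ nrm1 (γ s - p) + nrm1 (o - γ s) := by
      rw [hA, hB, hfs']
      have h1' : |(-3/8:ℝ) + 1| = 5/8 := by norm_num
      have h2' : |(-3/8:ℝ)| = 3/8 := by norm_num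
      rw [h1', h2']
      linarith
    calc ENNReal.ofReal (2*L + 1)
        ≤ ENNReal.ofReal (nrm1 (γ s - p) + nrm1 (o - γ s)) := ENNReal.ofReal_le_ofReal hsum
      _ ≤ ENNReal.ofReal (nrm1 (γ s - p)) + ENNReal.ofReal (nrm1 (o - γ s)) :=
          ENNReal.ofReal_add_le
  -- lower bound on geo o q
  have hlb2 : ENNReal.ofReal (L + 1) ≤ geo nrm1 (free ({W} : Finset (Set (Pt 2)))) o q := by
    apply geo_ge
    rintro γ ⟨hc, h0, h1, hf⟩
    have h00 : (0:ℝ) ∈ Set.Icc (0:ℝ) 1 := Set.left_mem_Icc.mpr zero_le_one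
    refine le_trans ?_ (pathLen_ge γ h00)
    rw [h0, h1]
    have hz : nrm1 (o - o) = 0 := by rw [sub_self]; simp [nrm1]
    rw [hz, ENNReal.ofReal_zero, zero_add]
    apply ENNReal.ofReal_le_ofReal
    rw [nrm1_two]
    simp only [Pi.sub_apply, hq0, hq1, ho0, ho1]
    rw [sub_zero, sub_neg_eq_add, zero_add, abs_one, abs_of_nonneg hL0.le]
    linarith
  refine ⟨{W}, p, q, o, hOfam, hpfree, hqfree, hofree, hcorners, ?_⟩
  have hstep : ENNReal.ofReal (3 - ε) * geo nrm1 (free ({W} : Finset (Set (Pt 2)))) p q <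
      ENNReal.ofReal (2*L + 1) + ENNReal.ofReal (L + 1) := by
    rcases le_or_gt (3 - ε) 0 with hcase | hcase
    · rw [ENNReal.ofReal_eq_zero.mpr hcase, zero_mul]
      calc (0:ℝ≥0∞) < ENNReal.ofReal (2*L + 1) := ENNReal.ofReal_pos.mpr (by linarith)
        _ ≤ _ := le_self_add
    · calc ENNReal.ofReal (3 - ε) * geo nrm1 (free ({W} : Finset (Set (Pt 2)))) p q
          ≤ ENNReal.ofReal (3 - ε) * ENNReal.ofReal (L + 2) := mul_le_mul_right hub _
        _ = ENNReal.ofReal ((3 - ε) * (L + 2)) := (ENNReal.ofReal_mul hcase.le).symm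
        _ < ENNReal.ofReal ((2*L + 1) + (L + 1)) := by
            rw [ENNReal.ofReal_lt_ofReal_iff (by linarith)]
            nlinarith
        _ ≤ ENNReal.ofReal (2*L + 1) + ENNReal.ofReal (L + 1) := ENNReal.ofReal_add_le
  exact lt_of_lt_of_le hstep (add_le_add hlb1 hlb2)

end GeoSpanner
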